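/- Let {A(k)}_{k≥0} be m×m row-stochastic matrices satisfying the periodical strong connectivity and weight assumptions, and set Φ_A(k,s) = A(k)A(k−1)⋯A(s) for k ≥ s. Then: (1) for each s ≥ 0 the limit Φ̄_A(s) = lim_{k→∞} Φ_A(k,s) exists; (2) Φ̄_A(s) = 1_m μ_sᵀ for some stochastic vector μ_s ∈ ℝ^m; (3) there exist a constant C > 0 and β ∈ (0,1), depending only on η, m and B, such that |Φ_A(k,s)_{ij} − (μ_s)_j| ≤ C β^{k−s} for all k ≥ s ≥ 0 and all i, j ∈ {1,…,m}. -/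

import Mathlib

open Finset


/-- `Phi A s t` is the backward matrix product Φ_A(s+t, s) = A(s+t)·A(s+t−1)⋯A(s). -/
def Phi {m : ℕ} (A : ℕ → Matrix (Fin m) (Fin m) ℝ) (s : ℕ) :
    ℕ → Matrix (Fin m) (Fin m) ℝ
  | 0 => A s
  | t + 1 => A (s + t + 1) * Phi A s t

section Aux

variable {m : ℕ} {A : ℕ → Matrix (Fin m) (Fin m) ℝ} {η : ℝ}

lemma Phi_succ (A : ℕ → Matrix (Fin m) (Fin m) ℝ) (s t : ℕ) :
    Phi A s (t + 1) = A (s + t + 1) * Phi A s t := rfl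

lemma Phi_nonneg (hAnn : ∀ k, ∀ i j, 0 ≤ A k i j) (s t : ℕ) (i j : Fin m) :
    0 ≤ Phi A s t i j := by
  induction t generalizing i with
  | zero => exact hAnn s i j
  | succ t ih =>
    rw [Phi_succ, Matrix.mul_apply]
    exact Finset.sum_nonneg fun l _ => mul_nonneg (hAnn _ _ _) (ih l)

lemma Phi_row (hArow : ∀ k, ∀ i, ∑ j, A k i j = 1) (s t : ℕ) (i : Fin m) :
    ∑ j, Phi A s t i j = 1 := by
  induction t generalizing i with
  | zero => exact hArow s i
  | succ t ih =>
    simp only [Phi_succ, Matrix.mul_apply]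
    rw [Finset.sum_comm]
    calc ∑ l, ∑ j, A (s+t+1) i l * Phi A s t l j
        = ∑ l, A (s+t+1) i l * ∑ j, Phi A s t l j := by
          simp [Finset.mul_sum]
      _ = 1 := by simp only [ih]; simpa using hArow (s+t+1) i

lemma Phi_le_one (hAnn : ∀ k, ∀ i j, 0 ≤ A k i j) (hArow : ∀ k, ∀ i, ∑ j, A k i j = 1)
    (s t : ℕ) (i j : Fin m) : Phi A s t i j ≤ 1 := by
  calc Phi A s t i j ≤ ∑ j', Phi A s t i j' :=
        Finset.single_le_sum (fun l _ => Phi_nonneg hAnn s t i l) (mem_univ j)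
    _ = 1 := Phi_row hArow s t i

lemma Phi_comp (A : ℕ → Matrix (Fin m) (Fin m) ℝ) (s t u : ℕ) :
    Phi A s (t + u + 1) = Phi A (s + t + 1) u * Phi A s t := by
  induction u with
  | zero => rfl
  | succ u ih =>
    have h1 : t + (u + 1) + 1 = (t + u + 1) + 1 := rfl
    rw [h1, Phi_succ, ih, ← Matrix.mul_assoc, show s + (t + u + 1) + 1 = (s + t + 1) + u + 1 by omega]
    rfl

lemma Phi_pos_lb (hAnn : ∀ k, ∀ i j, 0 ≤ A k i j)
    (hAunif : ∀ k, ∀ i j, 0 < A k i j → η ≤ A k i j) (hη0 : 0 < η)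
    (s t : ℕ) (i j : Fin m) (h : 0 < Phi A s t i j) : η ^ (t + 1) ≤ Phi A s t i j := by
  induction t generalizing i with
  | zero => simpa [Phi] using hAunif s i j h
  | succ t ih =>
    rw [Phi_succ, Matrix.mul_apply] at h ⊢
    obtain ⟨l, hl⟩ : ∃ l, 0 < A (s+t+1) i l * Phi A s t l j := by
      by_contra hc
      push_neg at hc
      exact absurd (Finset.sum_nonpos fun l _ => hc l) (not_le.mpr h)
    have h1 : 0 < A (s+t+1) i l := by
      rcases mul_pos_iff.mp hl with ⟨h1, _⟩ | ⟨_, h2⟩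
      · exact h1
      · exact absurd h2 (not_lt.mpr (Phi_nonneg hAnn s t l j))
    have h2 : 0 < Phi A s t l j := by
      rcases mul_pos_iff.mp hl with ⟨_, h2⟩ | ⟨h1', _⟩
      · exact h2
      · exact absurd h1' (not_lt.mpr (hAnn (s+t+1) i l))
    have hsingle := Finset.single_le_sum
      (f := fun l => A (s+t+1) i l * Phi A s t l j)
      (fun l _ => mul_nonneg (hAnn _ _ _) (Phi_nonneg hAnn s t l j)) (mem_univ l)
    calc η ^ (t + 1 + 1) = η * η ^ (t + 1) := by ring
      _ ≤ A (s+t+1) i l * Phi A s t l j :=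
          mul_le_mul (hAunif _ _ _ h1) (ih l h2) (pow_pos hη0 _).le h1.le
      _ ≤ _ := hsingle

lemma Phi_pos_mono (hAnn : ∀ k, ∀ i j, 0 ≤ A k i j)
    (hAdiag : ∀ k, ∀ i, η ≤ A k i i) (hη0 : 0 < η)
    (s t u : ℕ) (i j : Fin m) (h : 0 < Phi A s t i j) : 0 < Phi A s (t + u) i j := by
  induction u with
  | zero => exact h
  | succ u ih =>
    rw [show t + (u + 1) = (t + u) + 1 from rfl, Phi_succ, Matrix.mul_apply]
    have hp : 0 < A (s+(t+u)+1) i i * Phi A s (t+u) i j :=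
      mul_pos (hη0.trans_le (hAdiag _ _)) ih
    exact hp.trans_le (Finset.single_le_sum
      (f := fun l => A (s+(t+u)+1) i l * Phi A s (t+u) l j)
      (fun l _ => mul_nonneg (hAnn _ _ _) (Phi_nonneg hAnn _ _ _ _)) (mem_univ i))

lemma Phi_edge (hAnn : ∀ k, ∀ i j, 0 ≤ A k i j) (s t : ℕ) {x w j : Fin m}
    (he : 0 < A (s + t + 1) x w) (h : 0 < Phi A s t w j) :
    0 < Phi A s (t + 1) x j := by
  rw [Phi_succ, Matrix.mul_apply]
  exact (mul_pos he h).trans_le (Finset.single_le_sum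
    (f := fun l => A (s+t+1) x l * Phi A s t l j)
    (fun l _ => mul_nonneg (hAnn _ _ _) (Phi_nonneg hAnn _ _ _ _)) (mem_univ w))

lemma crossing {α : Type*} {r : α → α → Prop} {S : Set α} {u v : α}
    (h : Relation.ReflTransGen r u v) (hu : u ∈ S) (hv : v ∉ S) :
    ∃ a ∈ S, ∃ b, b ∉ S ∧ r a b := by
  induction h with
  | refl => exact absurd hu hv
  | tail hub hbc ih =>
    rename_i b c
    by_cases hb : b ∈ S
    · exact ⟨b, hb, c, hv, hbc⟩
    · exact ih hb

lemma Phi_pos_all (hm : 1 ≤ m) (hAnn : ∀ k, ∀ i j, 0 ≤ A k i j)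
    (hAdiag : ∀ k, ∀ i, η ≤ A k i i) (hη0 : 0 < η)
    {B : ℕ} (hB : 0 < B)
    (hconn : ∀ k : ℕ, ∀ u v : Fin m,
      Relation.ReflTransGen
        (fun jj ii : Fin m => ∃ t, k ≤ t ∧ t < k + B ∧ 0 < A t ii jj) u v)
    (s : ℕ) (i j : Fin m) : 0 < Phi A s ((m - 1) * B) i j := by
  classical
  set S : ℕ → Finset (Fin m) := fun t => univ.filter (fun v => 0 < Phi A s t v j) with hS
  have hmemS : ∀ t v, v ∈ S t ↔ 0 < Phi A s t v j := by intro t v; simp [hS]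
  have hmono : ∀ t u, S t ⊆ S (t + u) := by
    intro t u v hv
    rw [hmemS] at hv ⊢
    exact Phi_pos_mono hAnn hAdiag hη0 s t u v j hv
  have hj0 : j ∈ S 0 := by
    rw [hmemS]
    exact hη0.trans_le (hAdiag s j)
  have hsubB : ∀ r : ℕ, S (r * B) ⊆ S ((r + 1) * B) := by
    intro r
    have h := hmono (r * B) B
    rwa [show r * B + B = (r + 1) * B by ring] at h
  have hgrow : ∀ r : ℕ, S (r * B) ≠ univ → (S (r * B)).card + 1 ≤ (S ((r + 1) * B)).card := by
    intro r hne
    obtain ⟨v, hv⟩ : ∃ v, v ∉ S (r * B) := by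
      by_contra hc; push_neg at hc
      exact hne (Finset.eq_univ_of_forall hc)
    have hjS : j ∈ S (r * B) := by simpa using hmono 0 (r * B) hj0
    obtain ⟨a, ha, b, hb, t', ht1, ht2, hpos⟩ :=
      crossing (S := (↑(S (r * B)) : Set (Fin m))) (hconn (s + r * B + 1) j v)
        (by exact_mod_cast hjS) (by exact_mod_cast hv)
    obtain ⟨d, hd, rfl⟩ : ∃ d, d < B ∧ t' = s + (r * B + d) + 1 := by
      refine ⟨t' - (s + r * B + 1), by omega, by omega⟩
    have haS : a ∈ S (r * B + d) := hmono (r * B) d (by exact_mod_cast ha)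
    have hbS : b ∈ S (r * B + d + 1) :=
      (hmemS _ _).mpr (Phi_edge hAnn s (r * B + d) hpos ((hmemS _ _).mp haS))
    have hbS' : b ∈ S ((r + 1) * B) := by
      have h2 := hmono (r * B + d + 1) (B - d - 1) hbS
      have he : r * B + d + 1 + (B - d - 1) = (r + 1) * B := by
        have : (r + 1) * B = r * B + B := by ring
        omega
      rwa [he] at h2
    have hbnot : b ∉ S (r * B) := by simpa using hb
    exact Finset.card_lt_card ((Finset.ssubset_iff_of_subset (hsubB r)).mpr ⟨b, hbS', hbnot⟩)
  have hcard : ∀ r, min (r + 1) m ≤ (S (r * B)).card := by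
    intro r
    induction r with
    | zero =>
      simp only [zero_mul]
      have h1 : 1 ≤ (S 0).card := Finset.card_pos.mpr ⟨j, hj0⟩
      omega
    | succ r ih =>
      by_cases hu : S (r * B) = univ
      · have h2 : S ((r + 1) * B) = univ := Finset.eq_univ_of_forall fun v => hsubB r (hu ▸ mem_univ v)
        rw [h2, Finset.card_univ, Fintype.card_fin]
        omega
      · have h3 := hgrow r hu
        omega
  have hfin : i ∈ S ((m - 1) * B) := by
    have hc := hcard (m - 1)
    have hle : (S ((m - 1) * B)).card ≤ m := by
      simpa using Finset.card_le_univ (S ((m - 1) * B))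
    have hceq : (S ((m - 1) * B)).card = Fintype.card (Fin m) := by
      rw [Fintype.card_fin]; omega
    have : S ((m - 1) * B) = univ := Finset.eq_univ_of_card _ hceq
    rw [this]; exact mem_univ i
  exact (hmemS _ _).mp hfin

lemma bounds_le (hne : (univ : Finset (Fin m)).Nonempty)
    (Q : Matrix (Fin m) (Fin m) ℝ) (x : Fin m → ℝ)
    (hQnn : ∀ i l, 0 ≤ Q i l) (hQrow : ∀ i, ∑ l, Q i l = 1) (i : Fin m) :
    univ.inf' hne x ≤ ∑ l, Q i l * x l ∧ ∑ l, Q i l * x l ≤ univ.sup' hne x := by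
  constructor
  · calc univ.inf' hne x = ∑ l, Q i l * univ.inf' hne x := by
          rw [← Finset.sum_mul, hQrow, one_mul]
      _ ≤ ∑ l, Q i l * x l := Finset.sum_le_sum fun l _ =>
          mul_le_mul_of_nonneg_left (Finset.inf'_le _ (mem_univ l)) (hQnn i l)
  · calc ∑ l, Q i l * x l ≤ ∑ l, Q i l * univ.sup' hne x := Finset.sum_le_sum fun l _ =>
          mul_le_mul_of_nonneg_left (Finset.le_sup' _ (mem_univ l)) (hQnn i l)
      _ = univ.sup' hne x := by rw [← Finset.sum_mul, hQrow, one_mul]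

lemma contract (hne : (univ : Finset (Fin m)).Nonempty)
    (Q : Matrix (Fin m) (Fin m) ℝ) (x : Fin m → ℝ) {δ : ℝ} (hδ : 0 ≤ δ)
    (hQ : ∀ i l, δ ≤ Q i l) (hQrow : ∀ i, ∑ l, Q i l = 1) :
    univ.sup' hne (fun i => ∑ l, Q i l * x l) - univ.inf' hne (fun i => ∑ l, Q i l * x l)
      ≤ (1 - δ) * (univ.sup' hne x - univ.inf' hne x) := by
  obtain ⟨l0, _, hl0⟩ := Finset.exists_mem_eq_inf' hne x
  obtain ⟨l1, _, hl1⟩ := Finset.exists_mem_eq_sup' hne x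
  set Mx := univ.sup' hne x with hMx
  set mx := univ.inf' hne x with hmx
  have hosc : 0 ≤ Mx - mx := by
    have h1 : mx ≤ x l1 := Finset.inf'_le _ (mem_univ l1)
    rw [hl1]
    linarith
  have hup : ∀ i, ∑ l, Q i l * x l ≤ Mx - δ * (Mx - mx) := by
    intro i
    have hsplit : ∑ l, Q i l * x l = Q i l0 * x l0 + ∑ l ∈ univ.erase l0, Q i l * x l :=
      (Finset.add_sum_erase _ _ (mem_univ l0)).symm
    have hrow' : ∑ l ∈ univ.erase l0, Q i l = 1 - Q i l0 := by
      have h := Finset.add_sum_erase univ (fun l => Q i l) (mem_univ l0)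
      rw [hQrow i] at h
      linarith
    have h1 : ∑ l ∈ univ.erase l0, Q i l * x l ≤ (1 - Q i l0) * Mx := by
      rw [← hrow', Finset.sum_mul]
      exact Finset.sum_le_sum fun l _ =>
        mul_le_mul_of_nonneg_left (Finset.le_sup' _ (mem_univ l)) (hδ.trans (hQ i l))
    have h2 : δ ≤ Q i l0 := hQ i l0
    have h3 : x l0 = mx := hl0.symm
    nlinarith [mul_le_mul_of_nonneg_right h2 hosc]
  have hdown : ∀ i, mx + δ * (Mx - mx) ≤ ∑ l, Q i l * x l := by
    intro i
    have hsplit : ∑ l, Q i l * x l = Q i l1 * x l1 + ∑ l ∈ univ.erase l1, Q i l * x l :=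
      (Finset.add_sum_erase _ _ (mem_univ l1)).symm
    have hrow' : ∑ l ∈ univ.erase l1, Q i l = 1 - Q i l1 := by
      have h := Finset.add_sum_erase univ (fun l => Q i l) (mem_univ l1)
      rw [hQrow i] at h
      linarith
    have h1 : (1 - Q i l1) * mx ≤ ∑ l ∈ univ.erase l1, Q i l * x l := by
      rw [← hrow', Finset.sum_mul]
      exact Finset.sum_le_sum fun l _ =>
        mul_le_mul_of_nonneg_left (Finset.inf'_le _ (mem_univ l)) (hδ.trans (hQ i l))
    have h2 : δ ≤ Q i l1 := hQ i l1
    have h3 : x l1 = Mx := hl1.symm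
    nlinarith [mul_le_mul_of_nonneg_right h2 hosc]
  have hs := Finset.sup'_le hne (fun i => ∑ l, Q i l * x l) (fun i _ => hup i)
  have hi := Finset.le_inf' hne (fun i => ∑ l, Q i l * x l) (fun i _ => hdown i)
  nlinarith [mul_nonneg hδ hosc]

end Aux

lemma central {m : ℕ} (hm : 1 ≤ m) (A : ℕ → Matrix (Fin m) (Fin m) ℝ)
    (hAnn : ∀ k, ∀ i j, 0 ≤ A k i j)
    (hArow : ∀ k, ∀ i, ∑ j, A k i j = 1)
    (η : ℝ) (hη : η ∈ Set.Ioo (0 : ℝ) 1)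
    (hAunif : ∀ k, ∀ i j, 0 < A k i j → η ≤ A k i j)
    (hAdiag : ∀ k, ∀ i, η ≤ A k i i)
    (B : ℕ) (hB : 0 < B)
    (hconn : ∀ k : ℕ, ∀ u v : Fin m,
      Relation.ReflTransGen
        (fun jj ii : Fin m => ∃ t, k ≤ t ∧ t < k + B ∧ 0 < A t ii jj) u v) :
    ∃ μ : ℕ → (Fin m → ℝ), (∀ s j, 0 ≤ μ s j) ∧
      ∃ C : ℝ, 0 < C ∧ ∃ β ∈ Set.Ioo (0 : ℝ) 1,
        ∀ s t i j, |Phi A s t i j - μ s j| ≤ C * β ^ t := by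
  obtain ⟨hη0, hη1⟩ := hη
  have hne : (Finset.univ : Finset (Fin m)).Nonempty := ⟨⟨0, hm⟩, mem_univ _⟩
  set N := (m - 1) * B with hN
  set δ := η ^ (N + 1) with hδdef
  have hδ0 : 0 < δ := pow_pos hη0 _
  have hδ1 : δ < 1 := pow_lt_one₀ hη0.le hη1 (by omega)
  set γ := 1 - δ with hγdef
  have hγ0 : 0 < γ := by rw [hγdef]; linarith
  have hγ1 : γ < 1 := by rw [hγdef]; linarith
  set MS : ℕ → ℕ → Fin m → ℝ := fun s t j => univ.sup' hne (fun i => Phi A s t i j) with hMS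
  set mI : ℕ → ℕ → Fin m → ℝ := fun s t j => univ.inf' hne (fun i => Phi A s t i j) with hmI
  have hentry : ∀ s t i j, mI s t j ≤ Phi A s t i j ∧ Phi A s t i j ≤ MS s t j :=
    fun s t i j => ⟨Finset.inf'_le (fun i => Phi A s t i j) (mem_univ i),
      Finset.le_sup' (fun i => Phi A s t i j) (mem_univ i)⟩
  have hbounds : ∀ s t u i j,
      mI s t j ≤ Phi A s (t + u + 1) i j ∧ Phi A s (t + u + 1) i j ≤ MS s t j := by
    intro s t u i j
    have hc : Phi A s (t + u + 1) i j = ∑ l, Phi A (s+t+1) u i l * Phi A s t l j := by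
      rw [Phi_comp, Matrix.mul_apply]
    rw [hc]
    exact bounds_le hne (Phi A (s+t+1) u) (fun l => Phi A s t l j)
      (fun i' l => Phi_nonneg hAnn _ _ _ _) (fun i' => Phi_row hArow _ _ _) i
  have hMSmono : ∀ s t u j, MS s (t + u) j ≤ MS s t j := by
    intro s t u j
    cases u with
    | zero => exact le_refl _
    | succ u =>
      exact Finset.sup'_le hne _ fun i _ =>
        (hbounds s t u i j).2
  have hmImono : ∀ s t u j, mI s t j ≤ mI s (t + u) j := by
    intro s t u j
    cases u with
    | zero => exact le_refl _
    | succ u =>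
      exact Finset.le_inf' hne _ fun i _ => (hbounds s t u i j).1
  have hosc_contract : ∀ s t j,
      MS s (t + (N+1)) j - mI s (t + (N+1)) j ≤ γ * (MS s t j - mI s t j) := by
    intro s t j
    have hQ : ∀ i l, δ ≤ Phi A (s+t+1) N i l := fun i l =>
      Phi_pos_lb hAnn hAunif hη0 _ _ _ _ (Phi_pos_all hm hAnn hAdiag hη0 hB hconn _ i l)
    have hch : (fun i => Phi A s (t + (N+1)) i j)
        = fun i => ∑ l, Phi A (s+t+1) N i l * Phi A s t l j := by
      funext i
      rw [show t + (N+1) = t + N + 1 by ring, Phi_comp, Matrix.mul_apply]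
    have hcon := contract hne (Phi A (s+t+1) N) (fun l => Phi A s t l j) hδ0.le hQ
      (fun i' => Phi_row hArow _ _ _)
    simp only [hMS, hmI, hγdef]
    rw [hch]
    exact hcon
  have hoscnn : ∀ s t j, 0 ≤ MS s t j - mI s t j := fun s t j =>
    sub_nonneg.mpr ((hentry s t ⟨0, hm⟩ j).1.trans (hentry s t ⟨0, hm⟩ j).2)
  have hosc1 : ∀ s t j, MS s t j - mI s t j ≤ 1 := by
    intro s t j
    have h1 : MS s t j ≤ 1 := Finset.sup'_le hne _ fun i _ => Phi_le_one hAnn hArow s t i j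
    have h2 : (0:ℝ) ≤ mI s t j := Finset.le_inf' hne _ fun i _ => Phi_nonneg hAnn s t i j
    linarith
  have hosckey : ∀ s j q r, MS s ((N+1) * q + r) j - mI s ((N+1) * q + r) j ≤ γ ^ q := by
    intro s j q r
    induction q with
    | zero => simpa using hosc1 s r j
    | succ q ih =>
      have he : (N+1) * (q+1) + r = ((N+1) * q + r) + (N+1) := by ring
      rw [he]
      calc MS s (((N+1) * q + r) + (N+1)) j - mI s (((N+1) * q + r) + (N+1)) j
          ≤ γ * (MS s ((N+1)*q + r) j - mI s ((N+1)*q+r) j) := hosc_contract s _ j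
        _ ≤ γ * γ ^ q := mul_le_mul_of_nonneg_left ih hγ0.le
        _ = γ ^ (q+1) := by ring
  have hoscbd : ∀ s t j, MS s t j - mI s t j ≤ γ ^ (t / (N+1)) := by
    intro s t j
    have h := hosckey s j (t / (N+1)) (t % (N+1))
    rwa [Nat.div_add_mod] at h
  have hBdd : ∀ s j, BddBelow (Set.range fun t => MS s t j) := by
    intro s j
    refine ⟨0, ?_⟩
    rintro x ⟨t, rfl⟩
    exact le_trans (Phi_nonneg hAnn s t ⟨0, hm⟩ j) (hentry s t ⟨0, hm⟩ j).2
  have hμle : ∀ s t j, (⨅ t', MS s t' j) ≤ MS s t j := fun s t j => ciInf_le (hBdd s j) t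
  have hleμ : ∀ s t j, mI s t j ≤ ⨅ t', MS s t' j := by
    intro s t j
    apply le_ciInf
    intro t'
    rcases le_total t t' with h | h
    · obtain ⟨u, rfl⟩ := Nat.exists_eq_add_of_le h
      exact le_trans (hmImono s t u j) (by linarith [hoscnn s (t+u) j])
    · obtain ⟨u, rfl⟩ := Nat.exists_eq_add_of_le h
      exact le_trans (by linarith [hoscnn s (t'+u) j] : mI s (t'+u) j ≤ MS s (t'+u) j)
        (hMSmono s t' u j)
  set β := γ ^ (((N:ℝ)+1)⁻¹) with hβdef
  have hβ0 : 0 < β := Real.rpow_pos_of_pos hγ0 _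
  have hβ1 : β < 1 := Real.rpow_lt_one hγ0.le hγ1 (by positivity)
  have hβpow : β ^ (N+1) = γ := by
    rw [hβdef, ← Real.rpow_natCast (γ ^ (((N:ℝ)+1)⁻¹)) (N+1), ← Real.rpow_mul hγ0.le]
    rw [show (((N:ℝ)+1)⁻¹ * ((N+1:ℕ):ℝ)) = 1 by push_cast; field_simp]
    exact Real.rpow_one γ
  set C := (β ^ N)⁻¹ with hCdef
  have hC0 : 0 < C := by positivity
  have hkey : ∀ t, γ ^ (t / (N+1)) ≤ C * β ^ t := by
    intro t
    have he := Nat.div_add_mod t (N+1)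
    have hrmd : t % (N+1) ≤ N := by
      have := Nat.mod_lt t (show 0 < N+1 by omega)
      omega
    have h1 : β ^ t = γ ^ (t / (N+1)) * β ^ (t % (N+1)) := by
      conv_lhs => rw [← he]
      rw [pow_add, pow_mul, hβpow]
    have h2 : β ^ N ≤ β ^ (t % (N+1)) := pow_le_pow_of_le_one hβ0.le hβ1.le hrmd
    have h3 : (0:ℝ) ≤ γ ^ (t / (N+1)) := by positivity
    rw [hCdef, h1, inv_mul_eq_div, le_div_iff₀ (pow_pos hβ0 N)]
    exact mul_le_mul_of_nonneg_left h2 h3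
  refine ⟨fun s j => ⨅ t', MS s t' j, ?_, C, hC0, β, ⟨hβ0, hβ1⟩, ?_⟩
  · intro s j
    apply le_ciInf
    intro t
    exact le_trans (Phi_nonneg hAnn s t ⟨0, hm⟩ j) (hentry s t ⟨0, hm⟩ j).2
  · intro s t i j
    have hb : |Phi A s t i j - ⨅ t', MS s t' j| ≤ MS s t j - mI s t j := by
      rw [abs_le]
      constructor
      · have := (hentry s t i j).1
        have := hμle s t j
        linarith
      · have := (hentry s t i j).2
        have := hleμ s t j
        linarith
    exact hb.trans ((hoscbd s t j).trans (hkey t))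

/-- Let {A(k)} be m×m row-stochastic matrices satisfying the periodical
strong connectivity and weight assumptions, and Φ_A(k,s) = A(k)A(k−1)⋯A(s) for k ≥ s.
Then (1) for each s the limit Φ̄_A(s) = lim_{k→∞} Φ_A(k,s) exists; (2) it equals
1_m μ_sᵀ for a stochastic vector μ_s; (3) there are C > 0 and β ∈ (0,1) with
|Φ_A(k,s)_{ij} − (μ_s)_j| ≤ C β^{k−s} for all k ≥ s and all i, j. -/
theorem stmt4 (m : ℕ) (hm : 1 ≤ m)
    (A : ℕ → Matrix (Fin m) (Fin m) ℝ)
    (hAnn : ∀ k, ∀ i j, 0 ≤ A k i j)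
    (hArow : ∀ k, ∀ i, ∑ j, A k i j = 1)
    (η : ℝ) (hη : η ∈ Set.Ioo (0 : ℝ) 1)
    (hAunif : ∀ k, ∀ i j, 0 < A k i j → η ≤ A k i j)
    (hAdiag : ∀ k, ∀ i, η ≤ A k i i)
    (B : ℕ) (hB : 0 < B)
    (hconn : ∀ k : ℕ, ∀ u v : Fin m,
      Relation.ReflTransGen
        (fun jj ii : Fin m => ∃ t, k ≤ t ∧ t < k + B ∧ 0 < A t ii jj) u v) :
    ∃ μ : ℕ → (Fin m → ℝ),
      (∀ s, (∀ j, 0 ≤ μ s j) ∧ ∑ j, μ s j = 1) ∧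
      (∀ s, Filter.Tendsto (fun k => Phi A s (k - s)) Filter.atTop
        (nhds (Matrix.of fun _ j => μ s j))) ∧
      (∃ C : ℝ, 0 < C ∧ ∃ β ∈ Set.Ioo (0 : ℝ) 1,
        ∀ s k, s ≤ k → ∀ i j, |Phi A s (k - s) i j - μ s j| ≤ C * β ^ (k - s)) := by

  obtain ⟨μ, hμnn, C, hC0, β, ⟨hβ0, hβ1⟩, hbound⟩ :=
    central hm A hAnn hArow η hη hAunif hAdiag B hB hconn
  have htends : ∀ s (i j : Fin m),
      Filter.Tendsto (fun k => Phi A s (k - s) i j) Filter.atTop (nhds (μ s j)) := by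
    intro s i j
    rw [tendsto_iff_norm_sub_tendsto_zero]
    have hsub : Filter.Tendsto (fun k : ℕ => k - s) Filter.atTop Filter.atTop :=
      Filter.tendsto_sub_atTop_nat s
    have h0 : Filter.Tendsto (fun t : ℕ => C * β ^ t) Filter.atTop (nhds 0) := by
      have h := tendsto_pow_atTop_nhds_zero_of_lt_one hβ0.le hβ1
      simpa using h.const_mul C
    refine squeeze_zero (fun k => norm_nonneg _) (fun k => ?_) (h0.comp hsub)
    simpa [Real.norm_eq_abs] using hbound s (k - s) i j
  have hsum : ∀ s, ∑ j, μ s j = 1 := by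
    intro s
    have h1 : Filter.Tendsto (fun k => ∑ j, Phi A s (k - s) (⟨0, hm⟩ : Fin m) j)
        Filter.atTop (nhds (∑ j, μ s j)) :=
      tendsto_finset_sum _ (fun j _ => htends s ⟨0, hm⟩ j)
    have h2 : (fun k => ∑ j, Phi A s (k - s) (⟨0, hm⟩ : Fin m) j) = fun _ => (1:ℝ) :=
      funext fun k => Phi_row hArow s _ _
    rw [h2] at h1
    exact tendsto_nhds_unique h1 tendsto_const_nhds
  refine ⟨μ, fun s => ⟨hμnn s, hsum s⟩, ?_, C, hC0, β, ⟨hβ0, hβ1⟩,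
    fun s k _ i j => hbound s (k - s) i j⟩
  intro s
  apply tendsto_pi_nhds.mpr
  intro i
  rw [tendsto_pi_nhds]
  intro j
  simpa using htends s i j
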